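/- Let k ≥ 2, let N be a k-k-AND-BN with negation on n nodes, and let U be a control node set for N. Then for every j = 1, …, ⌊k/2⌋ and every node x_i ∈ M_j, at least j of the outgoing nodes of x_i are control nodes; that is, |Γ⁺(x_i) ∩ U| ≥ j. -/
import Mathlib


namespace BN

variable {n : ℕ}

/-- The Boolean function `f` depends on input `j`. -/
def Depends (f : (Fin n → Bool) → Bool) (j : Fin n) : Prop :=
  ∃ x : Fin n → Bool, f (Function.update x j (!(x j))) ≠ f x

/-- The set of incoming nodes of node `i` (Γ⁻). -/
def inSet (F : Fin n → (Fin n → Bool) → Bool) (i : Fin n) : Set (Fin n) :=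
  {j | Depends (F i) j}

/-- The set of outgoing nodes of node `i` (Γ⁺). -/
def outSet (F : Fin n → (Fin n → Bool) → Bool) (i : Fin n) : Set (Fin n) :=
  {j | Depends (F j) i}

/-- The controlled trajectory: nodes in `U` get an xor-control signal. -/
def traj (F : Fin n → (Fin n → Bool) → Bool) (U : Finset (Fin n))
    (u : ℕ → Fin n → Bool) (x0 : Fin n → Bool) : ℕ → Fin n → Bool
  | 0 => x0
  | t + 1 => fun i =>
      if i ∈ U then Bool.xor (u t i) (F i (traj F U u x0 t))
      else F i (traj F U u x0 t)

/-- `U` is a control node set: any initial state can be driven to any target state. -/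
def IsControlSet (F : Fin n → (Fin n → Bool) → Bool) (U : Finset (Fin n)) : Prop :=
  ∀ x0 xT : Fin n → Bool, ∃ t : ℕ, 1 ≤ t ∧ ∃ u : ℕ → Fin n → Bool, traj F U u x0 t = xT

/-- A `k`-`k`-AND-BN with negation: node `i` is updated by the conjunction of literals
over the `k` distinct variables in `S i` with signs `sign i` (`true` = positive literal),
and every node occurs as an input to exactly `k` functions (outdegree `k`). -/
structure AndNegBN (n k : ℕ) where
  S : Fin n → Finset (Fin n)
  sign : Fin n → Fin n → Bool
  card_S : ∀ i, (S i).card = k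
  outdeg : ∀ j : Fin n, (Finset.univ.filter fun i => j ∈ S i).card = k

namespace AndNegBN

variable {k : ℕ}

/-- The update functions of the network. -/
def F (B : AndNegBN n k) : Fin n → (Fin n → Bool) → Bool :=
  fun i x => decide (∀ j ∈ B.S i, x j = B.sign i j)

/-- Number of occurrences of the positive literal `x i` among the update functions. -/
def posCount (B : AndNegBN n k) (i : Fin n) : ℕ :=
  (Finset.univ.filter fun l => i ∈ B.S l ∧ B.sign l i = true).card

/-- Number of occurrences of the negative literal `¬ x i` among the update functions. -/
def negCount (B : AndNegBN n k) (i : Fin n) : ℕ :=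
  (Finset.univ.filter fun l => i ∈ B.S l ∧ B.sign l i = false).card

/-- `M j`: the set of nodes `i` such that one of the literals `x i`, `¬ x i` appears
exactly `j` times and the other exactly `k - j` times. -/
def M (B : AndNegBN n k) (j : ℕ) : Finset (Fin n) :=
  Finset.univ.filter fun i =>
    (B.posCount i = j ∧ B.negCount i = k - j) ∨ (B.posCount i = k - j ∧ B.negCount i = j)

/-- The out-neighbors of node `i`: the nodes whose update function uses `i`. -/
def outNbrs (B : AndNegBN n k) (i : Fin n) : Finset (Fin n) :=
  Finset.univ.filter fun l => i ∈ B.S l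

end AndNegBN

/-- In a `k`-`k`-AND-BN with negation (`k ≥ 2`) with control node set `U`,
for every `j = 1, …, ⌊k/2⌋` and every node `i ∈ M_j`, at least `j` of the outgoing
nodes of `i` are control nodes: `|Γ⁺(i) ∩ U| ≥ j`. -/
theorem stmt19 (n k : ℕ) (hk : 2 ≤ k) (B : AndNegBN n k) (U : Finset (Fin n))
    (hU : IsControlSet B.F U) (j : ℕ) (hj1 : 1 ≤ j) (hj2 : j ≤ k / 2)
    (i : Fin n) (hi : i ∈ B.M j) :
    j ≤ (B.outNbrs i ∩ U).card := by
  have hjk : j ≤ k - j := by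
    have : j * 2 ≤ k := (Nat.le_div_iff_mul_le (by norm_num)).mp hj2
    omega
  obtain ⟨t, ht1, u, hu⟩ := hU (fun _ => false) (fun _ => true)
  obtain ⟨s, rfl⟩ : ∃ s, t = s + 1 := ⟨t - 1, by omega⟩
  set x0 : Fin n → Bool := fun _ => false with hx0
  set b := traj B.F U u x0 s i with hb
  have key : ∀ l, i ∈ B.S l → B.sign l i = !b → l ∈ U := by
    intro l hl hs
    by_contra hlU
    have h1 : traj B.F U u x0 (s + 1) l = true := by rw [hu]
    simp only [traj, hlU, if_false] at h1
    simp only [AndNegBN.F, decide_eq_true_eq] at h1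
    have := h1 i hl
    rw [hs, ← hb] at this
    cases b <;> simp at this
  have hsub : (Finset.univ.filter fun l => i ∈ B.S l ∧ B.sign l i = !b)
      ⊆ B.outNbrs i ∩ U := by
    intro l hl
    simp only [Finset.mem_filter, Finset.mem_univ, true_and] at hl
    refine Finset.mem_inter.mpr ⟨?_, key l hl.1 hl.2⟩
    simp [AndNegBN.outNbrs, hl.1]
  refine le_trans ?_ (Finset.card_le_card hsub)
  simp only [AndNegBN.M, Finset.mem_filter, Finset.mem_univ, true_and] at hi
  cases b with
  | false =>
    have : (Finset.univ.filter fun l => i ∈ B.S l ∧ B.sign l i = !false).card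
        = B.posCount i := by
      simp only [AndNegBN.posCount, Bool.not_false]
    rw [this]
    rcases hi with ⟨h, _⟩ | ⟨h, _⟩ <;> omega
  | true =>
    have : (Finset.univ.filter fun l => i ∈ B.S l ∧ B.sign l i = !true).card
        = B.negCount i := by
      simp only [AndNegBN.negCount, Bool.not_true]
    rw [this]
    rcases hi with ⟨_, h⟩ | ⟨_, h⟩ <;> omega

end BN
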